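/- Let K be a compact Hausdorff space and X a uniformly convex real Banach space with modulus of convexity δ_X. Let T : C(K) → X be a bounded linear operator with ‖T‖ = 1 that is represented by a countably additive, regular X-valued Borel vector measure G on K, i.e. x*(Tf) = ∫_K f d(x*G) for every f ∈ C(K) and every x* ∈ X*. Let 0 < ε < 1, let A ⊆ K be a Borel set, and let S : C(K) → X be the bounded linear operator satisfying x*(Sf) = ∫_A f d(x*G) for every f ∈ C(K) and x* ∈ X*. If ‖S‖ > 1 − δ_X(ε), then ‖T − S‖ < ε; equivalently, sup over f in the closed unit ball of C(K) of ‖∫_{K∖A} f dG‖ is less than ε. -/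

import Mathlib

open MeasureTheory

/-- The finite signed measure `E ↦ x*(G(E))` obtained from an `X`-valued vector measure `G`
and a continuous linear functional `x*`. -/
noncomputable def dualMeasure {K : Type*} [MeasurableSpace K] {X : Type*}
    [NormedAddCommGroup X] [NormedSpace ℝ X]
    (G : VectorMeasure K X) (xs : StrongDual ℝ X) : SignedMeasure K :=
  G.mapRange xs.toLinearMap.toAddMonoidHom xs.continuous

/-- The integral of a function against a signed measure, via the Jordan decomposition. -/
noncomputable def sintegral {K : Type*} [MeasurableSpace K]
    (s : SignedMeasure K) (f : K → ℝ) : ℝ :=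
  (∫ t, f t ∂s.toJordanDecomposition.posPart) - ∫ t, f t ∂s.toJordanDecomposition.negPart

/-- The semivariation `‖G‖(A) = sup {|x*G|(A) : ‖x*‖ ≤ 1}` of a vector measure. -/
noncomputable def semivariation {K : Type*} [MeasurableSpace K] {X : Type*}
    [NormedAddCommGroup X] [NormedSpace ℝ X]
    (G : VectorMeasure K X) (A : Set K) : ENNReal :=
  ⨆ xs ∈ Metric.closedBall (0 : StrongDual ℝ X) 1,
    (dualMeasure G xs).totalVariation A

/-- Regularity of a vector measure: every Borel set can be approximated from inside by
compact sets and from outside by open sets in semivariation. -/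
def IsRegularVM {K : Type*} [TopologicalSpace K] [MeasurableSpace K] {X : Type*}
    [NormedAddCommGroup X] [NormedSpace ℝ X] (G : VectorMeasure K X) : Prop :=
  ∀ E : Set K, MeasurableSet E → ∀ ε : ℝ, 0 < ε →
    ∃ F O : Set K, IsCompact F ∧ IsOpen O ∧ F ⊆ E ∧ E ⊆ O ∧
      semivariation G (O \ F) < ENNReal.ofReal ε

/-- The modulus of convexity of a real normed space `X`:
`δ_X(ε) = inf {1 - ‖(x+y)/2‖ : ‖x‖ ≤ 1, ‖y‖ ≤ 1, ‖x - y‖ ≥ ε}`. -/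
noncomputable def modulusOfConvexity (X : Type*) [NormedAddCommGroup X] (ε : ℝ) : ℝ :=
  sInf {d : ℝ | ∃ x y : X, ‖x‖ ≤ 1 ∧ ‖y‖ ≤ 1 ∧ ε ≤ ‖x - y‖ ∧ d = 1 - ‖x + y‖ / 2}

lemma jd_restrict {K : Type*} [MeasurableSpace K] (s : SignedMeasure K) {A : Set K}
    (hA : MeasurableSet A) :
    SignedMeasure.toJordanDecomposition (s.restrict A) =
      ⟨s.toJordanDecomposition.posPart.restrict A, s.toJordanDecomposition.negPart.restrict A,
        s.toJordanDecomposition.mutuallySingular.mono Measure.restrict_le_self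
          Measure.restrict_le_self⟩ := by
  apply SignedMeasure.toJordanDecomposition_eq
  ext B hB
  rw [VectorMeasure.restrict_apply _ hA hB]
  conv_lhs => rw [← s.toSignedMeasure_toJordanDecomposition]
  rw [JordanDecomposition.toSignedMeasure, JordanDecomposition.toSignedMeasure,
    VectorMeasure.sub_apply, VectorMeasure.sub_apply,
    Measure.toSignedMeasure_apply_measurable (hB.inter hA),
    Measure.toSignedMeasure_apply_measurable (hB.inter hA),
    Measure.toSignedMeasure_apply_measurable hB,
    Measure.toSignedMeasure_apply_measurable hB,
    measureReal_restrict_apply hB, measureReal_restrict_apply hB]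

lemma sintegral_restrict {K : Type*} [MeasurableSpace K] (s : SignedMeasure K) {A : Set K}
    (hA : MeasurableSet A) (g : K → ℝ) :
    sintegral (s.restrict A) g =
      (∫ t in A, g t ∂s.toJordanDecomposition.posPart) -
        ∫ t in A, g t ∂s.toJordanDecomposition.negPart := by
  rw [sintegral, jd_restrict s hA]

lemma cont_integrable {K : Type*} [TopologicalSpace K] [CompactSpace K] [MeasurableSpace K]
    [BorelSpace K] (ν : Measure K) [IsFiniteMeasure ν] (f : C(K, ℝ)) :
    Integrable (fun t => f t) ν :=
  f.continuous.integrable_of_hasCompactSupport (isClosed_tsupport _).isCompact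

lemma sintegral_comb {K : Type*} [TopologicalSpace K] [CompactSpace K] [MeasurableSpace K]
    [BorelSpace K] (s : SignedMeasure K) (f g : C(K, ℝ)) (σ : ℝ) :
    sintegral s (fun t => f t) - σ * sintegral s (fun t => g t)
      = sintegral s (fun t => f t - σ * g t) := by
  simp only [sintegral]
  rw [show (fun t => f t - σ * g t) = (fun t => f t - (σ • g : C(K, ℝ)) t) from
    funext fun t => by simp,
    integral_sub (cont_integrable _ f) (cont_integrable _ (σ • g)),
    integral_sub (cont_integrable _ f) (cont_integrable _ (σ • g))]
  have hg1 : ∀ ν : Measure K, ∀ _ : IsFiniteMeasure ν,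
      (∫ t, (σ • g : C(K, ℝ)) t ∂ν) = σ * ∫ t, g t ∂ν := by
    intro ν hν
    simp only [ContinuousMap.smul_apply, smul_eq_mul]
    exact integral_const_mul σ _
  rw [hg1 _ inferInstance, hg1 _ inferInstance]
  ring

lemma norm_le_of_dual_ball {X : Type*} [NormedAddCommGroup X] [NormedSpace ℝ X] (v : X) {M : ℝ}
    (hM : 0 ≤ M) (h : ∀ xs : StrongDual ℝ X, ‖xs‖ ≤ 1 → |xs v| ≤ M) : ‖v‖ ≤ M := by
  apply NormedSpace.norm_le_dual_bound ℝ v hM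
  intro f
  rcases eq_or_ne f 0 with rfl | hf
  · simpa using mul_nonneg hM (norm_nonneg (0 : StrongDual ℝ X))
  · have hfn : 0 < ‖f‖ := norm_pos_iff.2 hf
    have h1 : ‖(‖f‖⁻¹ • f)‖ ≤ 1 := by
      rw [norm_smul, norm_inv, norm_norm, inv_mul_cancel₀ hfn.ne']
    have h2 := h _ h1
    rw [ContinuousLinearMap.smul_apply, smul_eq_mul, abs_mul, abs_inv, abs_norm] at h2
    rw [Real.norm_eq_abs]
    calc |f v| = ‖f‖ * (‖f‖⁻¹ * |f v|) := by field_simp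
    _ ≤ ‖f‖ * M := mul_le_mul_of_nonneg_left h2 hfn.le
    _ = M * ‖f‖ := mul_comm _ _

lemma est {K : Type*} [TopologicalSpace K] [CompactSpace K] [MeasurableSpace K] [BorelSpace K]
    (ν : Measure K) [IsFiniteMeasure ν] (φ g : C(K, ℝ))
    (hg : ∀ t, |g t| ≤ 2) (hφ01 : ∀ t, φ t ∈ Set.Icc (0 : ℝ) 1)
    {A F O : Set K} (hA : MeasurableSet A) (hF : MeasurableSet F) (hO : MeasurableSet O)
    (hFA : F ⊆ A) (hAO : A ⊆ O) (hφ1 : ∀ t ∈ F, φ t = 1) (hφ0 : ∀ t ∈ Oᶜ, φ t = 0) :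
    |(∫ t, φ t * g t ∂ν) - ∫ t in A, g t ∂ν| ≤ 2 * (ν (O \ F)).toReal := by
  have h1 : Integrable (fun t => φ t * g t) ν := cont_integrable ν (φ * g)
  have h2 : Integrable (A.indicator (fun t => g t)) ν := (cont_integrable ν g).indicator hA
  rw [← integral_indicator hA, ← integral_sub h1 h2]
  have hb : ∀ t, ‖φ t * g t - A.indicator (fun t => g t) t‖
      ≤ (O \ F).indicator (fun _ => (2 : ℝ)) t := by
    intro t
    rw [Real.norm_eq_abs]
    by_cases ht : t ∈ O \ F
    · rw [Set.indicator_of_mem ht]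
      by_cases htA : t ∈ A
      · rw [Set.indicator_of_mem htA]
        obtain ⟨hl, hr⟩ := hφ01 t
        calc |φ t * g t - g t| = |φ t - 1| * |g t| := by rw [← abs_mul]; ring_nf
        _ ≤ 1 * 2 := by
            apply mul_le_mul _ (hg t) (abs_nonneg _) zero_le_one
            rw [abs_le]; constructor <;> linarith
        _ = 2 := one_mul 2
      · rw [Set.indicator_of_notMem htA, sub_zero, abs_mul]
        obtain ⟨hl, hr⟩ := hφ01 t
        calc |φ t| * |g t| ≤ 1 * 2 :=
          mul_le_mul (abs_le.2 ⟨by linarith, hr⟩) (hg t) (abs_nonneg _) zero_le_one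
        _ = 2 := one_mul 2
    · rw [Set.indicator_of_notMem ht]
      rcases not_and_or.1 ht with htO | htF
      · have htO' : t ∈ Oᶜ := htO
        have htA : t ∉ A := fun h => htO (hAO h)
        rw [hφ0 t htO', Set.indicator_of_notMem htA]
        simp
      · have htF' : t ∈ F := not_not.1 htF
        have htA : t ∈ A := hFA htF'
        rw [hφ1 t htF', Set.indicator_of_mem htA]
        simp
  calc |∫ t, (φ t * g t - A.indicator (fun t => g t) t) ∂ν|
      ≤ ∫ t, ‖φ t * g t - A.indicator (fun t => g t) t‖ ∂ν := by
        rw [← Real.norm_eq_abs]; exact norm_integral_le_integral_norm _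
  _ ≤ ∫ t, (O \ F).indicator (fun _ => (2 : ℝ)) t ∂ν :=
      integral_mono (h1.sub h2).norm ((integrable_const (2 : ℝ)).indicator (hO.diff hF)) hb
  _ = (ν (O \ F)).toReal * 2 := by
      rw [integral_indicator_const _ (hO.diff hF)]; simp [smul_eq_mul]; rfl
  _ = 2 * (ν (O \ F)).toReal := mul_comm _ _


set_option maxHeartbeats 1000000 in
/-- **Lemma.** Let `X` be uniformly convex, `T : C(K) → X` with `‖T‖ = 1` represented by
a countably additive, regular Borel vector measure `G`, let `0 < ε < 1`, `A` a Borel set,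
and let `S` satisfy `x*(S f) = ∫_A f d(x*G)` for all `f` and `x*`. If
`‖S‖ > 1 - δ_X(ε)`, then `‖T - S‖ < ε`. -/
theorem norm_sub_lt_of_restricted_norm_gt
    {K : Type*} [TopologicalSpace K] [CompactSpace K] [T2Space K]
    [MeasurableSpace K] [BorelSpace K]
    {X : Type*} [NormedAddCommGroup X] [NormedSpace ℝ X] [CompleteSpace X]
    [UniformConvexSpace X]
    (T : C(K, ℝ) →L[ℝ] X) (hT : ‖T‖ = 1)
    (G : VectorMeasure K X) (hreg : IsRegularVM G)
    (hrep : ∀ (f : C(K, ℝ)) (xs : StrongDual ℝ X),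
      xs (T f) = sintegral (dualMeasure G xs) (fun t => f t))
    {ε : ℝ} (hε0 : 0 < ε) (hε1 : ε < 1)
    (A : Set K) (hA : MeasurableSet A)
    (S : C(K, ℝ) →L[ℝ] X)
    (hS : ∀ (f : C(K, ℝ)) (xs : StrongDual ℝ X),
      xs (S f) = sintegral ((dualMeasure G xs).restrict A) (fun t => f t))
    (hSnorm : ‖S‖ > 1 - modulusOfConvexity X ε) :
    ‖T - S‖ < ε := by
  by_contra hcon
  push_neg at hcon
  set δ := modulusOfConvexity X ε with hδdef
  have hm1 : (1 : ℝ) ≤ max (1 - δ) 1 := le_max_right _ _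
  have hm0 : (0 : ℝ) < max (1 - δ) 1 := lt_of_lt_of_le one_pos hm1
  have hc : 0 < ‖S‖ - (1 - δ) := by linarith
  obtain ⟨η, hη, hη1, hη2⟩ : ∃ η : ℝ, 0 < η ∧ η * (2 + 2 * ε) ≤ ε ∧
      (1 - δ) * (1 + 2 * η) < ‖S‖ := by
    refine ⟨min (ε / (2 + 2 * ε)) ((‖S‖ - (1 - δ)) / (4 * max (1 - δ) 1)),
      lt_min (by positivity) (by positivity), ?_, ?_⟩
    · have h1 : min (ε / (2 + 2 * ε)) ((‖S‖ - (1 - δ)) / (4 * max (1 - δ) 1))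
          ≤ ε / (2 + 2 * ε) := min_le_left _ _
      have h2 : (0 : ℝ) < 2 + 2 * ε := by linarith
      calc min (ε / (2 + 2 * ε)) ((‖S‖ - (1 - δ)) / (4 * max (1 - δ) 1)) * (2 + 2 * ε)
          ≤ ε / (2 + 2 * ε) * (2 + 2 * ε) := by nlinarith
      _ = ε := div_mul_cancel₀ _ h2.ne'
    · set x := min (ε / (2 + 2 * ε)) ((‖S‖ - (1 - δ)) / (4 * max (1 - δ) 1)) with hxdef
      have hx0 : 0 < x := lt_min (by positivity) (by positivity)
      have h2 : x ≤ (‖S‖ - (1 - δ)) / (4 * max (1 - δ) 1) := min_le_right _ _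
      have h3 : x * (4 * max (1 - δ) 1) ≤ ‖S‖ - (1 - δ) := by
        calc x * (4 * max (1 - δ) 1)
            ≤ (‖S‖ - (1 - δ)) / (4 * max (1 - δ) 1) * (4 * max (1 - δ) 1) := by nlinarith
        _ = ‖S‖ - (1 - δ) := div_mul_cancel₀ _ (by positivity)
      have h4 : 1 - δ ≤ max (1 - δ) 1 := le_max_left _ _
      nlinarith
  obtain ⟨f₀, hf₀n, hf₀⟩ := S.exists_lt_apply_of_lt_opNorm hη2
  obtain ⟨f₁, hf₁n, hf₁⟩ := (T - S).exists_lt_apply_of_lt_opNorm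
    (show ε - η < ‖T - S‖ by linarith)
  obtain ⟨F, O, hFc, hOo, hFA, hAO, hsv⟩ := hreg A hA η hη
  have hFm : MeasurableSet F := hFc.isClosed.measurableSet
  have hOm : MeasurableSet O := hOo.measurableSet
  obtain ⟨φ, hφ0, hφ1, hφ01⟩ := exists_continuous_zero_one_of_isClosed
    (isClosed_compl_iff.2 hOo) hFc.isClosed
    (Set.disjoint_left.2 fun t ht htF => ht (hAO (hFA htF)))
  have hφ1' : ∀ t ∈ F, φ t = 1 := fun t ht => by simpa using hφ1 ht
  have hφ0' : ∀ t ∈ Oᶜ, φ t = 0 := fun t ht => by simpa using hφ0 ht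
  -- total variation bound
  have hTV : ∀ xs : StrongDual ℝ X, ‖xs‖ ≤ 1 →
      ((dualMeasure G xs).totalVariation (O \ F)).toReal ≤ η := by
    intro xs hxs
    have hmem : xs ∈ Metric.closedBall (0 : StrongDual ℝ X) 1 := by
      simpa [Metric.mem_closedBall, dist_zero_right] using hxs
    have h1 : (dualMeasure G xs).totalVariation (O \ F) ≤ semivariation G (O \ F) :=
      le_biSup (fun xs => (dualMeasure G xs).totalVariation (O \ F)) hmem
    exact ENNReal.toReal_le_of_le_ofReal hη.le (h1.trans hsv.le)
  -- key per-functional estimate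
  have key : ∀ g : C(K, ℝ), (∀ t, |g t| ≤ 2) → ∀ xs : StrongDual ℝ X, ‖xs‖ ≤ 1 →
      |sintegral (dualMeasure G xs) (fun t => (φ * g : C(K, ℝ)) t)
        - sintegral ((dualMeasure G xs).restrict A) (fun t => g t)| ≤ 2 * η := by
    intro g hg xs hxs
    rw [show (fun t => (φ * g : C(K, ℝ)) t) = (fun t => φ t * g t) from
        funext fun t => by simp]
    rw [sintegral_restrict _ hA]
    simp only [sintegral]
    have e1 := est (dualMeasure G xs).toJordanDecomposition.posPart φ g hg hφ01 hA hFm hOm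
      hFA hAO hφ1' hφ0'
    have e2 := est (dualMeasure G xs).toJordanDecomposition.negPart φ g hg hφ01 hA hFm hOm
      hFA hAO hφ1' hφ0'
    have hadd : ((dualMeasure G xs).totalVariation (O \ F)).toReal
        = ((dualMeasure G xs).toJordanDecomposition.posPart (O \ F)).toReal
          + ((dualMeasure G xs).toJordanDecomposition.negPart (O \ F)).toReal := by
      simp only [SignedMeasure.totalVariation, Measure.add_apply]
      exact ENNReal.toReal_add (measure_ne_top _ _) (measure_ne_top _ _)
    have htv := hTV xs hxs
    set P1 := ∫ t, φ t * g t ∂(dualMeasure G xs).toJordanDecomposition.posPart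
    set N1 := ∫ t, φ t * g t ∂(dualMeasure G xs).toJordanDecomposition.negPart
    set PA := ∫ t in A, g t ∂(dualMeasure G xs).toJordanDecomposition.posPart
    set NA := ∫ t in A, g t ∂(dualMeasure G xs).toJordanDecomposition.negPart
    calc |P1 - N1 - (PA - NA)| = |(P1 - PA) - (N1 - NA)| := by congr 1; ring
    _ ≤ |P1 - PA| + |N1 - NA| := abs_sub _ _
    _ ≤ 2 * ((dualMeasure G xs).toJordanDecomposition.posPart (O \ F)).toReal
        + 2 * ((dualMeasure G xs).toJordanDecomposition.negPart (O \ F)).toReal :=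
      add_le_add e1 e2
    _ = 2 * ((dualMeasure G xs).totalVariation (O \ F)).toReal := by rw [hadd]; ring
    _ ≤ 2 * η := by linarith
  -- the two approximations
  have main : ∀ (g h : C(K, ℝ)) (σ : ℝ), (∀ t, |g t| ≤ 2) →
      (∀ t, h t - σ * f₁ t = φ t * g t) → (∀ t, f₀ t - σ * f₁ t = g t) →
      ‖T h - (S f₀ + σ • (T f₁ - S f₁))‖ ≤ 2 * η := by
    intro g h σ hg hhg hfg
    apply norm_le_of_dual_ball _ (by linarith)
    intro xs hxs
    have e2 : xs (T h - (S f₀ + σ • (T f₁ - S f₁)))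
        = (xs (T h) - σ * xs (T f₁)) - (xs (S f₀) - σ * xs (S f₁)) := by
      simp only [map_sub, map_add, _root_.map_smul, smul_eq_mul]
      ring
    rw [e2, hrep h xs, hrep f₁ xs, hS f₀ xs, hS f₁ xs,
      sintegral_comb (dualMeasure G xs) h f₁ σ,
      sintegral_comb ((dualMeasure G xs).restrict A) f₀ f₁ σ]
    have r1 : (fun t => h t - σ * f₁ t) = (fun t => (φ * g : C(K, ℝ)) t) :=
      funext fun t => by rw [hhg t]; simp
    have r2 : (fun t => f₀ t - σ * f₁ t) = (fun t => g t) := funext fun t => hfg t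
    rw [r1, r2]
    exact key g hg xs hxs
  have habs₀ : ∀ t, |f₀ t| ≤ 1 := by
    intro t
    have := ContinuousMap.norm_coe_le_norm f₀ t
    rw [Real.norm_eq_abs] at this
    linarith
  have habs₁ : ∀ t, |f₁ t| ≤ 1 := by
    intro t
    have := ContinuousMap.norm_coe_le_norm f₁ t
    rw [Real.norm_eq_abs] at this
    linarith
  have hg1 : ∀ t, |(f₀ - f₁ : C(K, ℝ)) t| ≤ 2 := by
    intro t
    simp only [ContinuousMap.sub_apply]
    have := abs_sub (f₀ t) (f₁ t)
    have h0 := habs₀ t; have h1 := habs₁ t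
    linarith
  have hg2 : ∀ t, |(f₀ + f₁ : C(K, ℝ)) t| ≤ 2 := by
    intro t
    simp only [ContinuousMap.add_apply]
    have := abs_add_le (f₀ t) (f₁ t)
    have h0 := habs₀ t; have h1 := habs₁ t
    linarith
  have hnh : ∀ σ : ℝ, |σ| = 1 → ‖(φ * (f₀ - σ • f₁) + σ • f₁ : C(K, ℝ))‖ ≤ 1 := by
    intro σ hσ
    rw [ContinuousMap.norm_le _ zero_le_one]
    intro t
    simp only [ContinuousMap.add_apply, ContinuousMap.mul_apply, ContinuousMap.sub_apply,
      ContinuousMap.smul_apply, smul_eq_mul, Real.norm_eq_abs]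
    have hl := (hφ01 t).1; have hr := (hφ01 t).2
    have h0 := habs₀ t; have h1 := habs₁ t
    rw [abs_le] at h0 h1 ⊢
    have hσ1 : -1 ≤ σ ∧ σ ≤ 1 := abs_le.1 hσ.le
    have hσf : |σ * f₁ t| ≤ 1 := by
      rw [abs_mul, hσ]; simpa using habs₁ t
    rw [abs_le] at hσf
    constructor <;> nlinarith [hσf.1, hσf.2]
  -- case σ = 1
  have hcase : ∀ σ : ℝ, |σ| = 1 → ‖S f₀ + σ • (T f₁ - S f₁)‖ ≤ 1 + 2 * η := by
    intro σ hσ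
    have hgb : ∀ t, |(f₀ - σ • f₁ : C(K, ℝ)) t| ≤ 2 := by
      intro t
      simp only [ContinuousMap.sub_apply, ContinuousMap.smul_apply, smul_eq_mul]
      have hσf : |σ * f₁ t| ≤ 1 := by rw [abs_mul, hσ]; simpa using habs₁ t
      have := abs_sub (f₀ t) (σ * f₁ t)
      have h0 := habs₀ t
      linarith
    have hmain := main (f₀ - σ • f₁) (φ * (f₀ - σ • f₁) + σ • f₁) σ hgb
      (fun t => by simp [mul_comm]) (fun t => by simp)
    have hTh : ‖T (φ * (f₀ - σ • f₁) + σ • f₁)‖ ≤ 1 := by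
      calc ‖T (φ * (f₀ - σ • f₁) + σ • f₁)‖
          ≤ ‖T‖ * ‖(φ * (f₀ - σ • f₁) + σ • f₁ : C(K, ℝ))‖ := T.le_opNorm _
      _ ≤ 1 := by rw [hT, one_mul]; exact hnh σ hσ
    calc ‖S f₀ + σ • (T f₁ - S f₁)‖
        = ‖T (φ * (f₀ - σ • f₁) + σ • f₁)
            - (T (φ * (f₀ - σ • f₁) + σ • f₁) - (S f₀ + σ • (T f₁ - S f₁)))‖ := by
          rw [sub_sub_cancel]
    _ ≤ ‖T (φ * (f₀ - σ • f₁) + σ • f₁)‖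
        + ‖T (φ * (f₀ - σ • f₁) + σ • f₁) - (S f₀ + σ • (T f₁ - S f₁))‖ := norm_sub_le _ _
    _ ≤ 1 + 2 * η := add_le_add hTh hmain
  have hw₁ : ‖S f₀ + (T f₁ - S f₁)‖ ≤ 1 + 2 * η := by
    have := hcase 1 (by norm_num)
    rwa [one_smul] at this
  have hw₂ : ‖S f₀ - (T f₁ - S f₁)‖ ≤ 1 + 2 * η := by
    have := hcase (-1) (by norm_num)
    rwa [neg_one_smul, ← sub_eq_add_neg] at this
  -- conclude via modulus of convexity
  set β := 1 + 2 * η with hβdef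
  have hβ : (0 : ℝ) < β := by simp only [hβdef]; linarith
  set u := β⁻¹ • (S f₀ + (T f₁ - S f₁)) with hudef
  set v := β⁻¹ • (S f₀ - (T f₁ - S f₁)) with hvdef
  have hnorm_smul : ∀ w : X, ‖β⁻¹ • w‖ = β⁻¹ * ‖w‖ := by
    intro w
    rw [norm_smul, Real.norm_eq_abs, abs_of_pos (inv_pos.2 hβ)]
  have hu : ‖u‖ ≤ 1 := by
    rw [hudef, hnorm_smul]
    calc β⁻¹ * ‖S f₀ + (T f₁ - S f₁)‖ ≤ β⁻¹ * β := mul_le_mul_of_nonneg_left hw₁ (by positivity)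
    _ = 1 := inv_mul_cancel₀ hβ.ne'
  have hv : ‖v‖ ≤ 1 := by
    rw [hvdef, hnorm_smul]
    calc β⁻¹ * ‖S f₀ - (T f₁ - S f₁)‖ ≤ β⁻¹ * β := mul_le_mul_of_nonneg_left hw₂ (by positivity)
    _ = 1 := inv_mul_cancel₀ hβ.ne'
  have hR : ε - η < ‖T f₁ - S f₁‖ := by
    have : (T - S) f₁ = T f₁ - S f₁ := ContinuousLinearMap.sub_apply T S f₁
    rwa [this] at hf₁
  have huv : ε ≤ ‖u - v‖ := by
    have h1 : u - v = β⁻¹ • ((T f₁ - S f₁) + (T f₁ - S f₁)) := by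
      rw [hudef, hvdef, ← smul_sub]
      congr 1
      abel
    rw [h1, hnorm_smul, ← two_smul ℝ, norm_smul, Real.norm_eq_abs]
    have h2 : |(2 : ℝ)| = 2 := by norm_num
    rw [h2]
    have h3 : ε * β ≤ 2 * ‖T f₁ - S f₁‖ := by
      rw [hβdef]
      nlinarith [hR, hη1]
    calc ε = β⁻¹ * (ε * β) := by field_simp
    _ ≤ β⁻¹ * (2 * ‖T f₁ - S f₁‖) := mul_le_mul_of_nonneg_left h3 (by positivity)
  have husum : ‖u + v‖ = β⁻¹ * (2 * ‖S f₀‖) := by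
    have h1 : u + v = β⁻¹ • (S f₀ + S f₀) := by
      rw [hudef, hvdef, ← smul_add]
      congr 1
      abel
    rw [h1, hnorm_smul, ← two_smul ℝ, norm_smul, Real.norm_eq_abs]
    norm_num
  have hδle : δ ≤ 1 - ‖u + v‖ / 2 := by
    rw [hδdef, modulusOfConvexity]
    apply csInf_le
    · refine ⟨0, ?_⟩
      rintro d ⟨x, y, hx, hy, -, rfl⟩
      have := norm_add_le x y
      linarith
    · exact ⟨u, v, hu, hv, huv, rfl⟩
  rw [husum] at hδle
  have h5 : β⁻¹ * ‖S f₀‖ ≤ 1 - δ := by linarith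
  have h6 : ‖S f₀‖ ≤ (1 - δ) * β := by
    calc ‖S f₀‖ = β * (β⁻¹ * ‖S f₀‖) := by field_simp
    _ ≤ β * (1 - δ) := mul_le_mul_of_nonneg_left h5 hβ.le
    _ = (1 - δ) * β := mul_comm _ _
  rw [hβdef] at h6
  exact absurd hf₀ (not_lt.2 h6)
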